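/- Let x ∈ ℂ with |x| = 1 and x ∉ {i, −i}, and let t ∈ ℝ with 1 − tx ≠ 0. If the complex number w = (x + t)/(1 − tx) satisfies |w| = 1, then w = x or w = −1/x. (That is, the orbit of a point x of the unit circle other than ±i under the real Möbius transformations x ↦ (x+t)/(1−tx), t ∈ ℝ, meets the unit circle only at x and −1/x.) -/

import Mathlib

/-- if `|x| = 1`, `x ≠ ±i`, `t ∈ ℝ`, `1 - tx ≠ 0` and the image
`w = (x+t)/(1-tx)` of `x` under the real Möbius transformation `R_t` lies on the unit
circle, then `w = x` or `w = -1/x`. -/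
theorem stmt8 (x : ℂ) (hx : ‖x‖ = 1) (hxi : x ≠ Complex.I) (hxi' : x ≠ -Complex.I)
    (t : ℝ) (ht : 1 - (t : ℂ) * x ≠ 0)
    (hw : ‖(x + (t : ℂ)) / (1 - (t : ℂ) * x)‖ = 1) :
    (x + (t : ℂ)) / (1 - (t : ℂ) * x) = x ∨ (x + (t : ℂ)) / (1 - (t : ℂ) * x) = -1 / x := by
  have hns : Complex.normSq x = 1 := by
    rw [← Complex.sq_norm, hx]; ring
  rw [norm_div, div_eq_one_iff_eq (fun hc => ht (by simp [map_eq_zero] at hc; rw [hc]))] at hw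
  have h2 : Complex.normSq (x + (t : ℂ)) = Complex.normSq (1 - (t : ℂ) * x) := by
    rw [← Complex.sq_norm, ← Complex.sq_norm, hw]
  simp only [Complex.normSq_apply, Complex.add_re, Complex.add_im, Complex.sub_re,
    Complex.sub_im, Complex.one_re, Complex.one_im, Complex.mul_re, Complex.mul_im,
    Complex.ofReal_re, Complex.ofReal_im] at h2
  have hns' : x.re * x.re + x.im * x.im = 1 := by
    simpa [Complex.normSq_apply] using hns
  have h3 : t * x.re = 0 := by nlinarith
  rcases mul_eq_zero.1 h3 with h | h
  · left
    rw [h]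
    push_cast
    rw [add_zero, zero_mul, sub_zero, div_one]
  · exfalso
    have him : x.im * x.im = 1 := by nlinarith
    have : x.im = 1 ∨ x.im = -1 := by
      rcases mul_self_eq_one_iff.1 him with h1 | h1 <;> [left; right] <;> exact h1
    rcases this with h1 | h1
    · exact hxi (by apply Complex.ext <;> simp [h, h1])
    · exact hxi' (by apply Complex.ext <;> simp [h, h1])
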